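/- Let S_1, S_2, S_3 be Borel subsets of Polish spaces, P a stochastic kernel on S_1 × S_2 given S_3, and suppose the topologies on S_1 and S_2 have countable bases τ_b^1 and τ_b^2 such that the map s_3 ↦ P(O_1 × O_2 | s_3) is continuous on S_3 for every pair of finite intersections O_i = ∩_{j=1}^N O_i^j with O_i^j ∈ τ_b^i (i = 1,2). Then the stochastic kernel P on S_1 × S_2 given S_3 is weakly continuous. -/

import Mathlib

open MeasureTheory Filter Topology BoundedContinuousFunction
open scoped ENNReal NNReal

lemma stmt13_combine {α : Type*} {m n : ℕ} (τ : Set (Set α)) (O : Fin (m + 1) → Set α)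
    (Q : Fin (n + 1) → Set α) (hO : ∀ j, O j ∈ τ) (hQ : ∀ j, Q j ∈ τ) :
    ∃ R : Fin (m + 1 + n + 1) → Set α, (∀ j, R j ∈ τ) ∧
      (⋂ j, R j) = (⋂ j, O j) ∩ (⋂ j, Q j) := by
  refine ⟨fun j => if h : (j : ℕ) < m + 1 then O ⟨j, h⟩
    else Q ⟨(j : ℕ) - (m + 1), by omega⟩, ?_, ?_⟩
  · intro j
    dsimp only
    split
    · exact hO _
    · exact hQ _
  · ext x
    simp only [Set.mem_iInter, Set.mem_inter_iff]
    constructor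
    · intro h
      refine ⟨fun i => ?_, fun i => ?_⟩
      · have hi := h ⟨(i : ℕ), by omega⟩
        rw [dif_pos (show ((i : ℕ)) < m + 1 from i.isLt)] at hi
        simpa using hi
      · have hi := h ⟨m + 1 + (i : ℕ), by omega⟩
        rw [dif_neg (by simp; omega)] at hi
        simpa using hi
    · rintro ⟨h1, h2⟩ j
      split
      · exact h1 _
      · exact h2 _

theorem stmt13 {S1 S2 S3 : Type*}
    [MetricSpace S1] [SecondCountableTopology S1] [MeasurableSpace S1] [BorelSpace S1]
    [MetricSpace S2] [SecondCountableTopology S2] [MeasurableSpace S2] [BorelSpace S2]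
    [MetricSpace S3] [SecondCountableTopology S3] [MeasurableSpace S3] [BorelSpace S3]
    (P : S3 → Measure (S1 × S2)) (hPm : Measurable P)
    (hPprob : ∀ s, IsProbabilityMeasure (P s))
    (τ1 : Set (Set S1)) (h1c : τ1.Countable)
    (h1b : TopologicalSpace.IsTopologicalBasis τ1)
    (τ2 : Set (Set S2)) (h2c : τ2.Countable)
    (h2b : TopologicalSpace.IsTopologicalBasis τ2)
    (hcont : ∀ (N1 N2 : ℕ) (O1 : Fin (N1 + 1) → Set S1) (O2 : Fin (N2 + 1) → Set S2),
      (∀ j, O1 j ∈ τ1) → (∀ j, O2 j ∈ τ2) →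
      Continuous (fun s3 => P s3 ((⋂ j, O1 j) ×ˢ (⋂ j, O2 j)))) :
    ∀ f : (S1 × S2) →ᵇ ℝ, Continuous (fun s3 => ∫ p, f p ∂(P s3)) := by
  classical
  have hfin : ∀ (x : S3) (s : Set (S1 × S2)), P x s ≠ ⊤ := fun x s => by
    have := hPprob x; exact measure_ne_top _ _
  -- the class of "boxes"
  set IsBox : Set (S1 × S2) → Prop := fun B => ∃ N1 N2, ∃ O1 : Fin (N1+1) → Set S1,
    ∃ O2 : Fin (N2+1) → Set S2, (∀ j, O1 j ∈ τ1) ∧ (∀ j, O2 j ∈ τ2) ∧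
    B = (⋂ j, O1 j) ×ˢ (⋂ j, O2 j) with hIsBox
  have box_open : ∀ B, IsBox B → IsOpen B := by
    rintro B ⟨N1, N2, O1, O2, m1, m2, rfl⟩
    exact (isOpen_iInter_of_finite fun j => h1b.isOpen (m1 j)).prod
          (isOpen_iInter_of_finite fun j => h2b.isOpen (m2 j))
  have box_inter : ∀ B C, IsBox B → IsBox C → IsBox (B ∩ C) := by
    rintro _ _ ⟨N1, N2, O1, O2, m1, m2, rfl⟩ ⟨M1, M2, Q1, Q2, g1, g2, rfl⟩
    obtain ⟨R1, hR1, e1⟩ := stmt13_combine τ1 O1 Q1 m1 g1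
    obtain ⟨R2, hR2, e2⟩ := stmt13_combine τ2 O2 Q2 m2 g2
    exact ⟨N1 + 1 + M1, N2 + 1 + M2, R1, R2, hR1, hR2,
      by rw [e1, e2, Set.prod_inter_prod]⟩
  have box_cont : ∀ B, IsBox B → Continuous fun x => P x B := by
    rintro _ ⟨N1, N2, O1, O2, m1, m2, rfl⟩
    exact hcont N1 N2 O1 O2 m1 m2
  have box_cont_real : ∀ B, IsBox B → Continuous fun x => (P x B).toReal := by
    intro B hB
    rw [continuous_iff_continuousAt]
    intro x
    exact (ENNReal.tendsto_toReal (hfin _ _)).comp (box_cont B hB).continuousAt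
  -- continuity for finite unions of boxes (via inclusion-exclusion step)
  have union_cont_real : ∀ (n : ℕ) (g : ℕ → Set (S1 × S2)), (∀ i, IsBox (g i)) →
      Continuous fun x => (P x (⋃ i ∈ Finset.range n, g i)).toReal := by
    intro n
    induction n with
    | zero => intro g hg; simpa using continuous_const
    | succ n ih =>
      intro g hg
      have hU : (⋃ i ∈ Finset.range (n+1), g i) = g n ∪ ⋃ i ∈ Finset.range n, g i := by
        rw [Finset.range_add_one]; simp
      have hrest_meas : MeasurableSet (⋃ i ∈ Finset.range n, g i) :=
        (isOpen_biUnion fun i _ => box_open _ (hg i)).measurableSet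
      have hinter : g n ∩ (⋃ i ∈ Finset.range n, g i) = ⋃ i ∈ Finset.range n, (g n ∩ g i) := by
        rw [Set.inter_iUnion₂]
      have key : ∀ x, (P x (⋃ i ∈ Finset.range (n+1), g i)).toReal =
          (P x (g n)).toReal + (P x (⋃ i ∈ Finset.range n, g i)).toReal
            - (P x (⋃ i ∈ Finset.range n, (g n ∩ g i))).toReal := by
        intro x
        have h := measure_union_add_inter (μ := P x) (g n) hrest_meas
        have h2 := congrArg ENNReal.toReal h
        rw [ENNReal.toReal_add (hfin _ _) (hfin _ _),
            ENNReal.toReal_add (hfin _ _) (hfin _ _)] at h2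
        rw [hU, hinter] at *
        linarith
      have : (fun x => (P x (⋃ i ∈ Finset.range (n+1), g i)).toReal) =
          fun x => (P x (g n)).toReal + (P x (⋃ i ∈ Finset.range n, g i)).toReal
            - (P x (⋃ i ∈ Finset.range n, (g n ∩ g i))).toReal := funext key
      rw [this]
      exact ((box_cont_real _ (hg n)).add (ih g hg)).sub
        (ih (fun i => g n ∩ g i) (fun i => box_inter _ _ (hg n) (hg i)))
  have union_cont : ∀ (n : ℕ) (g : ℕ → Set (S1 × S2)), (∀ i, IsBox (g i)) →
      Continuous fun x => P x (⋃ i ∈ Finset.range n, g i) := by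
    intro n g hg
    have : (fun x => P x (⋃ i ∈ Finset.range n, g i)) =
        fun x => ENNReal.ofReal ((P x (⋃ i ∈ Finset.range n, g i)).toReal) := by
      funext x; rw [ENNReal.ofReal_toReal (hfin _ _)]
    rw [this]
    exact ENNReal.continuous_ofReal.comp (union_cont_real n g hg)
  -- liminf condition for open sets, along converging sequences
  have h_opens : ∀ (G : Set (S1 × S2)), IsOpen G → ∀ (x : S3) (u : ℕ → S3),
      Tendsto u atTop (𝓝 x) → P x G ≤ atTop.liminf fun n => P (u n) G := by
    intro G hG x u hu
    obtain ⟨S, hSsub, rfl⟩ := (h1b.prod h2b).open_eq_sUnion hG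
    have hScount : S.Countable := (h1c.image2 h2c _).mono hSsub
    rcases S.eq_empty_or_nonempty with rfl | hne
    · simp
    obtain ⟨f, rfl⟩ := hScount.exists_eq_range hne
    have hbox : ∀ i, IsBox (f i) := by
      intro i
      obtain ⟨U, hU, V, hV, hUV⟩ := hSsub (Set.mem_range_self i)
      exact ⟨0, 0, fun _ => U, fun _ => V, fun _ => hU, fun _ => hV, by rw [Set.iInter_const, Set.iInter_const]; exact hUV.symm⟩
    rw [Set.sUnion_range]
    set A : ℕ → Set (S1 × S2) := fun n => ⋃ i ∈ Finset.range n, f i with hA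
    have hmono : Monotone A := by
      intro a b hab
      exact Set.biUnion_subset_biUnion_left (fun i hi =>
        Finset.mem_range.mpr (lt_of_lt_of_le (Finset.mem_range.mp hi) hab))
    have hiUnion : ⋃ n, A n = ⋃ i, f i := by
      apply Set.Subset.antisymm
      · exact Set.iUnion_subset fun n => Set.iUnion₂_subset fun i _ => Set.subset_iUnion f i
      · exact Set.iUnion_subset fun i => Set.subset_iUnion_of_subset (i+1)
          (Set.subset_biUnion_of_mem (Finset.self_mem_range_succ i))
    have htend : Tendsto (fun n => P x (A n)) atTop (𝓝 (P x (⋃ i, f i))) := by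
      rw [← hiUnion]
      exact tendsto_measure_iUnion_atTop hmono
    refine le_of_tendsto' htend fun n => ?_
    have hAn : Tendsto (fun k => P (u k) (A n)) atTop (𝓝 (P x (A n))) :=
      ((union_cont n f hbox).tendsto x).comp hu
    calc P x (A n) = atTop.liminf (fun k => P (u k) (A n)) := hAn.liminf_eq.symm
      _ ≤ atTop.liminf (fun k => P (u k) (⋃ i, f i)) :=
          liminf_le_liminf (Eventually.of_forall fun k =>
            measure_mono (hiUnion ▸ Set.subset_iUnion A n))
  -- conclude via portmanteau along sequences
  intro f
  refine continuous_iff_seqContinuous.mpr ?_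
  intro u x hu
  set μ : ProbabilityMeasure (S1 × S2) := ⟨P x, hPprob x⟩ with hμ
  set μs : ℕ → ProbabilityMeasure (S1 × S2) := fun n => ⟨P (u n), hPprob (u n)⟩ with hμs
  have h_opens' : ∀ G, IsOpen G → μ G ≤ atTop.liminf fun i => μs i G := by
    intro G hG
    have aux : (↑(atTop.liminf fun i => μs i G) : ℝ≥0∞) =
        atTop.liminf (fun i => ((μs i G : ℝ≥0) : ℝ≥0∞)) := by
      refine Monotone.map_liminf_of_continuousAt (F := atTop) ENNReal.coe_mono (fun i => μs i G)
        ENNReal.continuous_coe.continuousAt ?_ ?_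
      · exact IsBoundedUnder.isCoboundedUnder_ge ⟨1, by simp⟩
      · exact ⟨0, by simp⟩
    rw [← ENNReal.coe_le_coe, aux]
    simp only [MeasureTheory.ProbabilityMeasure.ennreal_coeFn_eq_coeFn_toMeasure]
    exact h_opens G hG x u hu
  have := MeasureTheory.tendsto_of_forall_isOpen_le_liminf h_opens'
  exact MeasureTheory.ProbabilityMeasure.tendsto_iff_forall_integral_tendsto.mp this f
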